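/- Let G be an undirected graph and let H be the undirected graph obtained from G by adding two new nodes s and t that are each adjacent to every node of V(G). Then a subset S ⊆ V(G) is a vertex cover of G if and only if H \ S contains no odd-length s–t path. -/

import Mathlib

/-- The undirected graph `H` obtained from `G` by adding two new vertices
`s = Sum.inr false` and `t = Sum.inr true`, each adjacent to every vertex of
`G` (but not to each other). -/
def starred {V : Type*} (G : SimpleGraph V) : SimpleGraph (V ⊕ Bool) :=
  SimpleGraph.fromRel (fun a b =>
    match a, b with
    | Sum.inl u, Sum.inl v => G.Adj u v
    | Sum.inl _, Sum.inr _ => True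
    | _, _ => False)

/-- **(Reduction from Vertex Cover, undirected version.)**
`S ⊆ V(G)` is a vertex cover of `G` iff `H \ S` contains no odd-length
`s – t` path, i.e. iff every odd-length `s – t` path of `H` passes through a
vertex of `S`. -/
theorem vertex_cover_iff_no_odd_st_path {V : Type*} (G : SimpleGraph V)
    (S : Set V) :
    (∀ u v, G.Adj u v → u ∈ S ∨ v ∈ S) ↔
    ∀ p : (starred G).Walk (Sum.inr false) (Sum.inr true),
      p.IsPath → Odd p.length → ∃ u ∈ S, Sum.inl u ∈ p.support := by
  constructor
  · intro hcov p hp hodd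
    by_contra hno
    push_neg at hno
    cases p with
    | cons h q =>
      rename_i x
      cases x with
      | inr b =>
        simp [starred, SimpleGraph.fromRel_adj] at h
      | inl v =>
        cases q with
        | cons h2 q2 =>
          rename_i y
          cases y with
          | inl w =>
            have hadj : G.Adj v w := by
              have := (SimpleGraph.fromRel_adj _ _ _).mp h2
              rcases this.2 with h' | h'
              · exact h'
              · exact h'.symm
            rcases hcov v w hadj with hv | hw
            · exact hno v hv (by simp)
            · exact hno w hw (by simp)
          | inr b =>
            cases b with
            | false =>
              rw [SimpleGraph.Walk.cons_isPath_iff] at hp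
              exact hp.2 (by simp)
            | true =>
              rw [SimpleGraph.Walk.cons_isPath_iff] at hp
              have hq2 : q2 = SimpleGraph.Walk.nil :=
                SimpleGraph.Walk.isPath_iff_eq_nil.mp
                  ((SimpleGraph.Walk.cons_isPath_iff _ _).mp hp.1).1
              subst hq2
              simp [SimpleGraph.Walk.length_cons, Nat.odd_iff] at hodd
  · intro hP u v huv
    by_contra hc
    push_neg at hc
    obtain ⟨hu, hv⟩ := hc
    have h1 : (starred G).Adj (Sum.inr false) (Sum.inl u) := by
      simp [starred, SimpleGraph.fromRel_adj]
    have h2 : (starred G).Adj (Sum.inl u) (Sum.inl v) := by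
      simp [starred, SimpleGraph.fromRel_adj, huv, huv.ne]
    have h3 : (starred G).Adj (Sum.inl v) (Sum.inr true) := by
      simp [starred, SimpleGraph.fromRel_adj]
    let p : (starred G).Walk (Sum.inr false) (Sum.inr true) :=
      SimpleGraph.Walk.cons h1 (SimpleGraph.Walk.cons h2
        (SimpleGraph.Walk.cons h3 SimpleGraph.Walk.nil))
    have hpath : p.IsPath := by
      rw [SimpleGraph.Walk.isPath_def]
      simp [p, huv.ne]
    have hodd : Odd p.length := by
      simp [p, SimpleGraph.Walk.length_cons]
      decide
    obtain ⟨w, hw, hmem⟩ := hP p hpath hodd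
    simp [p, SimpleGraph.Walk.support_cons] at hmem
    rcases hmem with rfl | rfl
    · exact hu hw
    · exact hv hw
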